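/- Let n ≥ 3, σ ∈ S_n with all cycles of length ≥ 3, and 0 < c ≤ n / L where L is the maximal cycle length of σ. Let W ∈ M_n ⊗ M_n be W = (1/n) Σ_{i,j} E_{ij} ⊗ (T∘Θ)(E_{ij}), where Θ(X) = diag((n-c)x_{11} + c·x_{σ(1)σ(1)}, ..., (n-c)x_{nn} + c·x_{σ(n)σ(n)}) - X and T is the transpose. Then the set {ζ ∈ C^n ⊗ C^n : ζ = ξ⊗η product vector with ⟨Wζ, ζ⟩ = 0} spans C^n ⊗ C^n. -/

import Mathlib

open Finset Matrix
open scoped Kronecker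

/-- The map `Θ^{(n,σ)}[n-c; c,…,c]` on `n × n` complex matrices. -/
def ThetaC (n : ℕ) (σ : Equiv.Perm (Fin n)) (c : ℝ)
    (X : Matrix (Fin n) (Fin n) ℂ) : Matrix (Fin n) (Fin n) ℂ :=
  Matrix.diagonal (fun i => (((n : ℝ) - c : ℝ) : ℂ) * X i i + (c : ℂ) * X (σ i) (σ i)) - X

/-- The entanglement witness `W = (1/n) Σ_{i,j} E_{ij} ⊗ (T ∘ Θ)(E_{ij})`. -/
noncomputable def Wwitness (n : ℕ) (σ : Equiv.Perm (Fin n)) (c : ℝ) :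
    Matrix (Fin n × Fin n) (Fin n × Fin n) ℂ :=
  ((n : ℂ))⁻¹ • ∑ i, ∑ j, (Matrix.single i j (1 : ℂ)) ⊗ₖ
    (ThetaC n σ c (Matrix.single i j (1 : ℂ)))ᵀ

lemma W_apply (n : ℕ) (σ : Equiv.Perm (Fin n)) (c : ℝ) (a b a' b' : Fin n) :
    Wwitness n σ c (a, b) (a', b') = (n : ℂ)⁻¹ *
      ((if b' = b ∧ a = b' ∧ a' = b' then (((n : ℝ) - c : ℝ) : ℂ) else 0)
        + (if b' = b ∧ a = σ b' ∧ a' = σ b' then (c : ℂ) else 0)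
        - (if a = b' ∧ a' = b then 1 else 0)) := by
  unfold Wwitness ThetaC
  simp only [Matrix.smul_apply, Matrix.sum_apply, Matrix.kroneckerMap_apply,
    Matrix.transpose_apply, Matrix.sub_apply, Matrix.diagonal_apply, Matrix.single,
    Matrix.of_apply, smul_eq_mul]
  rw [Finset.sum_eq_single a, Finset.sum_eq_single a']
  · congr 1
    push_cast
    by_cases h : b' = b
    · subst h
      simp [ite_and, mul_ite]
    · simp [h]
  · intro j _ hj
    by_cases h : b' = b <;> simp [h, hj, hj.symm]
  · simp
  · intro i _ hi
    apply Finset.sum_eq_zero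
    intro j _
    simp [hi, Ne.symm hi]
  · simp

lemma W_mulVec (n : ℕ) (σ : Equiv.Perm (Fin n)) (c : ℝ) (ξ η : Fin n → ℂ) (a b : Fin n) :
    (Wwitness n σ c).mulVec (fun p => ξ p.1 * η p.2) (a, b) =
      (n : ℂ)⁻¹ * ((if a = b then (((n : ℝ) - c : ℝ) : ℂ) * (ξ b * η b) else 0)
        + (if a = σ b then (c : ℂ) * (ξ (σ b) * η b) else 0)
        - ξ b * η a) := by
  simp only [Matrix.mulVec, dotProduct, Fintype.sum_prod_type, W_apply]
  simp only [ite_and, mul_ite, ite_mul, zero_mul, mul_zero, sub_mul, add_mul,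
    Finset.sum_sub_distrib, Finset.sum_add_distrib, Finset.mul_sum, Finset.sum_ite_eq,
    Finset.sum_ite_eq', Finset.mem_univ, if_true, mul_sub, mul_add]
  by_cases h1 : a = b <;> by_cases h2 : a = σ b <;>
    simp [h1, h2, Finset.sum_ite_eq, Finset.sum_ite_eq', mul_sub, mul_add] <;> ring

lemma quadform (n : ℕ) (σ : Equiv.Perm (Fin n)) (c : ℝ) (ξ η : Fin n → ℂ) :
    star (fun p : Fin n × Fin n => ξ p.1 * η p.2) ⬝ᵥ
      (Wwitness n σ c).mulVec (fun p => ξ p.1 * η p.2) =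
    (n : ℂ)⁻¹ * ((((n : ℝ) - c : ℝ) : ℂ) * ∑ a, star (ξ a) * ξ a * star (η a) * η a
      + (c : ℂ) * ∑ a, star (ξ (σ a)) * ξ (σ a) * star (η a) * η a
      - (∑ a, star (ξ a) * η a) * (∑ a, ξ a * star (η a))) := by
  simp only [dotProduct, Fintype.sum_prod_type, Pi.star_apply, W_mulVec]
  simp only [mul_sub, mul_add, mul_ite, mul_zero, Finset.sum_sub_distrib,
    Finset.sum_add_distrib, Finset.sum_ite_eq, Finset.sum_ite_eq', Finset.mem_univ, if_true,
    star_mul']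
  push_cast
  have e2 : (∑ x : Fin n, ∑ y : Fin n,
        if x = σ y then star (ξ x) * star (η y) * ((↑n : ℂ)⁻¹ * (↑c * (ξ (σ y) * η y))) else 0)
      = ∑ y : Fin n, star (ξ (σ y)) * star (η y) * ((↑n : ℂ)⁻¹ * (↑c * (ξ (σ y) * η y))) := by
    rw [Finset.sum_comm]
    refine Finset.sum_congr rfl fun y _ => ?_
    simp [Finset.sum_ite_eq']
  rw [e2]
  simp only [Finset.sum_mul_sum, Finset.mul_sum]
  refine congrArg₂ (· - ·) (congrArg₂ (· + ·) ?_ ?_) ?_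
  · exact Finset.sum_congr rfl fun i _ => by ring
  · exact Finset.sum_congr rfl fun i _ => by ring
  · rw [Finset.sum_comm]
    refine Finset.sum_congr rfl fun i _ => ?_
    rw [Finset.sum_mul, Finset.mul_sum]
    exact Finset.sum_congr rfl fun a _ => by ring

lemma single_quad_zero (n : ℕ) (σ : Equiv.Perm (Fin n)) (c : ℝ) (i j : Fin n)
    (hij : i ≠ j) (hσ : σ j ≠ i) :
    star (fun p : Fin n × Fin n => (Pi.single i (1 : ℂ) : Fin n → ℂ) p.1 *
        (Pi.single j (1 : ℂ) : Fin n → ℂ) p.2) ⬝ᵥ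
      (Wwitness n σ c).mulVec (fun p : Fin n × Fin n => (Pi.single i (1 : ℂ) : Fin n → ℂ) p.1 *
        (Pi.single j (1 : ℂ) : Fin n → ℂ) p.2) = 0 := by
  rw [quadform]
  have h1 : ∀ a : Fin n, star ((Pi.single i (1:ℂ) : Fin n → ℂ) a) *
      (Pi.single i (1:ℂ) : Fin n → ℂ) a *
      star ((Pi.single j (1:ℂ) : Fin n → ℂ) a) * (Pi.single j (1:ℂ) : Fin n → ℂ) a = 0 := by
    intro a
    by_cases h : a = i
    · subst h
      simp [Pi.single_apply, hij]
    · simp [Pi.single_apply, h]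
  have h2 : ∀ a : Fin n, star ((Pi.single i (1:ℂ) : Fin n → ℂ) (σ a)) *
      (Pi.single i (1:ℂ) : Fin n → ℂ) (σ a) *
      star ((Pi.single j (1:ℂ) : Fin n → ℂ) a) * (Pi.single j (1:ℂ) : Fin n → ℂ) a = 0 := by
    intro a
    by_cases h : a = j
    · subst h
      simp [Pi.single_apply, hσ]
    · simp [Pi.single_apply, h]
  have h3 : ∑ a : Fin n, star ((Pi.single i (1:ℂ) : Fin n → ℂ) a) *
      (Pi.single j (1:ℂ) : Fin n → ℂ) a = 0 := by
    apply Finset.sum_eq_zero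
    intro a _
    by_cases h : a = i
    · subst h
      simp [Pi.single_apply, hij]
    · simp [Pi.single_apply, h]
  rw [Finset.sum_eq_zero fun a _ => h1 a, Finset.sum_eq_zero fun a _ => h2 a, h3]
  simp

lemma unimod_quad_zero (n : ℕ) (σ : Equiv.Perm (Fin n)) (c : ℝ) (hn : (n : ℂ) ≠ 0)
    (ξ : Fin n → ℂ) (hone : ∀ a, star (ξ a) * ξ a = 1) :
    star (fun p : Fin n × Fin n => ξ p.1 * ξ p.2) ⬝ᵥ
      (Wwitness n σ c).mulVec (fun p => ξ p.1 * ξ p.2) = 0 := by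
  rw [quadform]
  have k1 : ∀ a : Fin n, star (ξ a) * ξ a * star (ξ a) * ξ a = 1 := by
    intro a
    rw [mul_assoc (star (ξ a) * ξ a), hone a, mul_one]
  have k2 : ∀ a : Fin n, star (ξ (σ a)) * ξ (σ a) * star (ξ a) * ξ a = 1 := by
    intro a
    rw [mul_assoc (star (ξ (σ a)) * ξ (σ a)), hone a, mul_one, hone (σ a)]
  have h1 : ∑ a : Fin n, star (ξ a) * ξ a * star (ξ a) * ξ a = (n : ℂ) := by
    rw [Finset.sum_congr rfl fun a _ => k1 a]
    simp [Finset.card_univ]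
  have h2 : ∑ a : Fin n, star (ξ (σ a)) * ξ (σ a) * star (ξ a) * ξ a = (n : ℂ) := by
    rw [Finset.sum_congr rfl fun a _ => k2 a]
    simp [Finset.card_univ]
  have h3 : ∑ a : Fin n, star (ξ a) * ξ a = (n : ℂ) := by
    rw [Finset.sum_congr rfl fun a _ => hone a]
    simp [Finset.card_univ]
  have h4 : ∑ a : Fin n, ξ a * star (ξ a) = (n : ℂ) := by
    rw [Finset.sum_congr rfl fun a _ => mul_comm (ξ a) (star (ξ a))]
    rw [Finset.sum_congr rfl fun a _ => hone a]
    simp [Finset.card_univ]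
  rw [h1, h2, h3, h4]
  field_simp
  push_cast
  ring

/-- auxiliary unimodular vector: value `u` on `{a,b}`, `1` elsewhere. -/
def phiV (n : ℕ) (a b : Fin n) (u : ℂ) : Fin n → ℂ := fun x => if x = a ∨ x = b then u else 1

lemma block_combo (n : ℕ) (a b : Fin n) :
    (fun p : Fin n × Fin n => if (p.1 = a ∨ p.1 = b) ∧ (p.2 = a ∨ p.2 = b) then (1 : ℂ) else 0)
      = (4 : ℂ)⁻¹ • ((fun p : Fin n × Fin n => phiV n a b 1 p.1 * phiV n a b 1 p.2)
        - (fun p : Fin n × Fin n => phiV n a b Complex.I p.1 * phiV n a b Complex.I p.2)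
        + (fun p : Fin n × Fin n => phiV n a b (-1) p.1 * phiV n a b (-1) p.2)
        - (fun p : Fin n × Fin n =>
            phiV n a b (-Complex.I) p.1 * phiV n a b (-Complex.I) p.2)) := by
  funext p
  simp only [Pi.smul_apply, Pi.sub_apply, Pi.add_apply, smul_eq_mul, phiV]
  by_cases h1 : p.1 = a ∨ p.1 = b <;> by_cases h2 : p.2 = a ∨ p.2 = b <;>
    simp only [h1, h2, if_true, if_false] <;> norm_num [Complex.I_mul_I] <;> ring

theorem stmt18 (n : ℕ) (hn : 3 ≤ n) (σ : Equiv.Perm (Fin n))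
    (hσ : ∀ i, σ i ≠ i ∧ σ (σ i) ≠ i) (c : ℝ) (hc : 0 < c)
    (hcL : ∀ i : Fin n, c * ((σ.cycleOf i).support.card : ℝ) ≤ n) :
    Submodule.span ℂ
        {ζ : Fin n × Fin n → ℂ |
          (∃ ξ η : Fin n → ℂ, ζ = fun p => ξ p.1 * η p.2) ∧
          star ζ ⬝ᵥ (Wwitness n σ c).mulVec ζ = 0} = ⊤ := by
  set S : Set (Fin n × Fin n → ℂ) :=
    {ζ : Fin n × Fin n → ℂ |
      (∃ ξ η : Fin n → ℂ, ζ = fun p => ξ p.1 * η p.2) ∧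
      star ζ ⬝ᵥ (Wwitness n σ c).mulVec ζ = 0} with hS
  have hn0 : (n : ℂ) ≠ 0 := by
    exact_mod_cast Nat.cast_ne_zero.mpr (by omega)
  -- product basis vectors with admissible indices lie in S
  have memS_single : ∀ i j : Fin n, i ≠ j → σ j ≠ i → Pi.single (i, j) (1 : ℂ) ∈ S := by
    intro i j h1 h2
    have he : (fun p : Fin n × Fin n => (Pi.single i (1 : ℂ) : Fin n → ℂ) p.1 *
        (Pi.single j (1 : ℂ) : Fin n → ℂ) p.2) = Pi.single (i, j) (1 : ℂ) := by
      funext p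
      rcases p with ⟨x, y⟩
      by_cases hx : x = i <;> by_cases hy : y = j <;>
        simp [Pi.single_apply, Prod.ext_iff, hx, hy]
    refine ⟨⟨_, _, he.symm⟩, ?_⟩
    rw [← he]
    exact single_quad_zero n σ c i j h1 h2
  -- the unimodular product vectors lie in S
  have memS_phi : ∀ (a b : Fin n) (u : ℂ), star u * u = 1 →
      (fun p : Fin n × Fin n => phiV n a b u p.1 * phiV n a b u p.2) ∈ S := by
    intro a b u hu
    refine ⟨⟨_, _, rfl⟩, unimod_quad_zero n σ c hn0 _ ?_⟩
    intro x
    by_cases h : x = a ∨ x = b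
    · simpa [phiV, h] using hu
    · simp [phiV, h]
  -- hence the block indicators are in the span
  have block_mem : ∀ a b : Fin n,
      (fun p : Fin n × Fin n => if (p.1 = a ∨ p.1 = b) ∧ (p.2 = a ∨ p.2 = b) then (1 : ℂ) else 0)
        ∈ Submodule.span ℂ S := by
    intro a b
    rw [block_combo]
    have k1 : star (1 : ℂ) * 1 = 1 := by simp
    have k2 : star Complex.I * Complex.I = 1 := by
      simp [Complex.star_def, Complex.conj_I, Complex.I_mul_I]
    have k3 : star (-1 : ℂ) * (-1) = 1 := by simp
    have k4 : star (-Complex.I) * (-Complex.I) = 1 := by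
      simp [Complex.star_def, Complex.conj_I, Complex.I_mul_I]
    exact Submodule.smul_mem _ _ (sub_mem (add_mem (sub_mem
      (Submodule.subset_span (memS_phi a b 1 k1))
      (Submodule.subset_span (memS_phi a b Complex.I k2)))
      (Submodule.subset_span (memS_phi a b (-1) k3)))
      (Submodule.subset_span (memS_phi a b (-Complex.I) k4)))
  -- diagonal singles
  have diag_mem : ∀ a : Fin n, Pi.single (a, a) (1 : ℂ) ∈ Submodule.span ℂ S := by
    intro a
    have he : (fun p : Fin n × Fin n =>
        if (p.1 = a ∨ p.1 = a) ∧ (p.2 = a ∨ p.2 = a) then (1 : ℂ) else 0)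
          = Pi.single (a, a) (1 : ℂ) := by
      funext p
      rcases p with ⟨x, y⟩
      by_cases hx : x = a <;> by_cases hy : y = a <;>
        simp [Pi.single_apply, Prod.ext_iff, hx, hy]
    rw [← he]
    exact block_mem a a
  -- all singles
  have single_mem : ∀ p : Fin n × Fin n, Pi.single p (1 : ℂ) ∈ Submodule.span ℂ S := by
    rintro ⟨i, j⟩
    by_cases hij : i = j
    · subst hij
      exact diag_mem i
    · have hsum : (fun p : Fin n × Fin n =>
          if (p.1 = i ∨ p.1 = j) ∧ (p.2 = i ∨ p.2 = j) then (1 : ℂ) else 0)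
            = (Pi.single (i, i) (1 : ℂ) : Fin n × Fin n → ℂ) + (Pi.single (i, j) (1 : ℂ) : Fin n × Fin n → ℂ)
              + (Pi.single (j, i) (1 : ℂ) : Fin n × Fin n → ℂ)
              + (Pi.single (j, j) (1 : ℂ) : Fin n × Fin n → ℂ) := by
        funext p
        rcases p with ⟨x, y⟩
        by_cases hx : x = i <;> by_cases hy : y = i <;> by_cases hx' : x = j <;>
          by_cases hy' : y = j <;>
          simp_all [Pi.single_apply, Prod.ext_iff]
      have hblock := block_mem i j
      rw [hsum] at hblock
      by_cases hσji : σ j = i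
      · have h1 : σ i ≠ j := by
          have := (hσ j).2
          rwa [hσji] at this
        have hji : Pi.single (j, i) (1 : ℂ) ∈ Submodule.span ℂ S :=
          Submodule.subset_span (memS_single j i (fun h => hij h.symm) h1)
        have : Pi.single (i, j) (1 : ℂ)
            = ((Pi.single (i, i) (1 : ℂ) : Fin n × Fin n → ℂ)
                + (Pi.single (i, j) (1 : ℂ) : Fin n × Fin n → ℂ)
                + (Pi.single (j, i) (1 : ℂ) : Fin n × Fin n → ℂ)
                + (Pi.single (j, j) (1 : ℂ) : Fin n × Fin n → ℂ))
              - (Pi.single (i, i) (1 : ℂ) : Fin n × Fin n → ℂ)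
              - (Pi.single (j, i) (1 : ℂ) : Fin n × Fin n → ℂ)
              - (Pi.single (j, j) (1 : ℂ) : Fin n × Fin n → ℂ) := by
          abel
        rw [this]
        exact sub_mem (sub_mem (sub_mem hblock (diag_mem i)) hji) (diag_mem j)
      · exact Submodule.subset_span (memS_single i j hij hσji)
  -- conclude
  rw [eq_top_iff]
  rintro x -
  rw [pi_eq_sum_univ x]
  refine Submodule.sum_mem _ fun p _ => Submodule.smul_mem _ _ ?_
  have : (fun j : Fin n × Fin n => if p = j then (1 : ℂ) else 0) = Pi.single p (1 : ℂ) := by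
    funext q
    simp [Pi.single_apply, eq_comm]
  rw [this]
  exact single_mem p
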